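/- arXiv:1408.0190 — 2 statements merged into one kernel-verified Lean document; each statement's English description precedes it below -/
import Mathlib

section
/- If A and B are admissible linear chains with e(A) + e(B) = 1, then d(A) = d(B). -/
/-- The tridiagonal matrix of a linear chain: diagonal entries from the list,
entries `-1` on the first sub- and super-diagonals, `0` elsewhere. -/
def chainMatrix (l : List ℤ) : Matrix (Fin l.length) (Fin l.length) ℤ :=
  fun i j =>
    if i = j then l.get i
    else if (i : ℕ) + 1 = (j : ℕ) ∨ (j : ℕ) + 1 = (i : ℕ) then -1 else 0

/-- The discriminant of a linear chain. -/
def disc (l : List ℤ) : ℤ := (chainMatrix l).det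

/-- A linear chain is admissible if it is nonempty and all entries are ≥ 2. -/
def Admissible (l : List ℤ) : Prop := l ≠ [] ∧ ∀ a ∈ l, 2 ≤ a

/-- The inductance of a chain. -/
def ind (l : List ℤ) : ℚ := (disc l.tail : ℚ) / (disc l : ℚ)

def tri {n : ℕ} (d : Fin n → ℤ) : Matrix (Fin n) (Fin n) ℤ :=
  fun i j =>
    if i = j then d i
    else if (i : ℕ) + 1 = (j : ℕ) ∨ (j : ℕ) + 1 = (i : ℕ) then -1 else 0

lemma tri_succ_succ {n : ℕ} (d : Fin (n + 1) → ℤ) (i j : Fin n) :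
    tri d i.succ j.succ = tri (d ∘ Fin.succ) i j := by
  simp only [tri, Fin.succ_inj, Function.comp]
  rcases eq_or_ne i j with h | h
  · subst h; simp
  · simp only [h, if_false]
    congr 1
    simp [Fin.val_succ]

lemma tri_submatrix {n : ℕ} (d : Fin (n + 1) → ℤ) :
    (tri d).submatrix Fin.succ Fin.succ = tri (d ∘ Fin.succ) := by
  ext i j; exact tri_succ_succ d i j

lemma det_tri_succ_succ (n : ℕ) (d : Fin (n + 2) → ℤ) :
    (tri d).det = d 0 * (tri (d ∘ Fin.succ)).det - (tri (d ∘ Fin.succ ∘ Fin.succ)).det := by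
  classical
  rw [Matrix.det_succ_column_zero, Fin.sum_univ_succ, Fin.sum_univ_succ]
  have h00 : tri d 0 0 = d 0 := by simp [tri]
  have h10 : tri d (Fin.succ 0) 0 = -1 := by
    simp [tri, Fin.ext_iff]
  have hzero : ∀ i : Fin n, tri d i.succ.succ 0 = 0 := by
    intro i
    simp only [tri]
    rw [if_neg, if_neg]
    · simp [Fin.ext_iff, Fin.val_succ]
    · simp [Fin.ext_iff, Fin.val_succ]
  rw [h00, h10]
  simp only [hzero, mul_zero, zero_mul, Finset.sum_const_zero, add_zero]
  rw [Fin.succAbove_zero, tri_submatrix]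
  set M1 := (tri d).submatrix (Fin.succAbove (Fin.succ 0)) Fin.succ with hM1
  have hsa0 : Fin.succAbove (Fin.succ 0) (0 : Fin (n + 1)) = 0 := by
    simp [Fin.succAbove, Fin.lt_iff_val_lt_val]
  have hM1_00 : M1 0 0 = -1 := by
    simp only [hM1, Matrix.submatrix_apply, hsa0]
    simp [tri, Fin.ext_iff]
  have hM1_0succ : ∀ j : Fin n, M1 0 j.succ = 0 := by
    intro j
    simp only [hM1, Matrix.submatrix_apply, hsa0, tri]
    rw [if_neg, if_neg]
    · simp [Fin.ext_iff, Fin.val_succ]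
    · simp [Fin.ext_iff, Fin.val_succ]
  have hminor : M1.submatrix Fin.succ (Fin.succAbove 0) = tri (d ∘ Fin.succ ∘ Fin.succ) := by
    rw [Fin.succAbove_zero]
    ext i j
    simp only [hM1, Matrix.submatrix_apply]
    have hsa : Fin.succAbove (Fin.succ 0) i.succ = i.succ.succ := by
      simp [Fin.succAbove, Fin.lt_iff_val_lt_val]
    rw [hsa, tri_succ_succ, tri_succ_succ]
    rfl
  have hd1 : M1.det = - (tri (d ∘ Fin.succ ∘ Fin.succ)).det := by
    rw [Matrix.det_succ_row_zero, Fin.sum_univ_succ]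
    simp only [hM1_0succ, mul_zero, zero_mul, Finset.sum_const_zero, add_zero]
    rw [hM1_00, hminor]
    simp
  rw [hd1]
  simp [Fin.val_succ]
  ring

lemma disc_nil : disc ([] : List ℤ) = 1 := by
  simp [disc, Matrix.det_isEmpty]

lemma disc_singleton (a : ℤ) : disc [a] = a := by
  simp [disc, Matrix.det_fin_one, chainMatrix]

lemma disc_cons_cons (a b : ℤ) (m : List ℤ) :
    disc (a :: b :: m) = a * disc (b :: m) - disc m := by
  exact det_tri_succ_succ m.length (a :: b :: m).get

lemma disc_grow : ∀ l : List ℤ, (∀ a ∈ l, 2 ≤ a) →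
    1 ≤ disc l ∧ (l ≠ [] → disc l.tail < disc l)
  | [] => by simp [disc_nil]
  | [a] => by
    intro h
    have ha : 2 ≤ a := h a (by simp)
    simp [disc_singleton, disc_nil]
    omega
  | a :: b :: m => by
    intro h
    have ha : 2 ≤ a := h a (by simp)
    obtain ⟨h1, h2⟩ := disc_grow (b :: m) (fun x hx => h x (by simp [hx]))
    have h2' : disc m < disc (b :: m) := h2 (by simp)
    have hrec := disc_cons_cons a b m
    constructor
    · nlinarith
    · intro _
      simp only [List.tail_cons]
      nlinarith

lemma disc_coprime : ∀ l : List ℤ, IsCoprime (disc l) (disc l.tail)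
  | [] => by simp [disc_nil]; exact isCoprime_one_left
  | [a] => by simp [disc_singleton, disc_nil]; exact isCoprime_one_right
  | a :: b :: m => by
    have ih := disc_coprime (b :: m)
    have hrec := disc_cons_cons a b m
    simp only [List.tail_cons] at *
    rw [hrec]
    have : a * disc (b :: m) - disc m = -disc m + disc (b :: m) * a := by ring
    rw [this]
    exact (ih.symm.neg_left.add_mul_left_left a).symm.symm

theorem disc_eq_of_ind_add_eq_one (A B : List ℤ) (hA : Admissible A) (hB : Admissible B)
    (h : ind A + ind B = 1) : disc A = disc B := by
  obtain ⟨hAne, hA2⟩ := hA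
  obtain ⟨hBne, hB2⟩ := hB
  obtain ⟨hA1, hA3⟩ := disc_grow A hA2
  obtain ⟨hB1, hB3⟩ := disc_grow B hB2
  have hApos : (0 : ℤ) < disc A := by linarith
  have hBpos : (0 : ℤ) < disc B := by linarith
  have hAq : (disc A : ℚ) ≠ 0 := by exact_mod_cast hApos.ne'
  have hBq : (disc B : ℚ) ≠ 0 := by exact_mod_cast hBpos.ne'
  have key : (disc A.tail : ℚ) * disc B + disc B.tail * disc A = disc A * disc B := by
    simp only [ind] at h
    field_simp at h
    linarith [h]
  have keyz : disc A.tail * disc B + disc B.tail * disc A = disc A * disc B := by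
    exact_mod_cast key
  have hcA := disc_coprime A
  have hcB := disc_coprime B
  have hdvd1 : disc A ∣ disc A.tail * disc B := by
    refine ⟨disc B - disc B.tail, ?_⟩
    linarith [keyz]
  have hAB : disc A ∣ disc B := hcA.dvd_of_dvd_mul_left hdvd1
  have hdvd2 : disc B ∣ disc B.tail * disc A := by
    refine ⟨disc A - disc A.tail, ?_⟩
    linarith [keyz]
  have hBA : disc B ∣ disc A := hcB.dvd_of_dvd_mul_left hdvd2
  exact Int.dvd_antisymm hApos.le hBpos.le hAB hBA
end

section
/- For every admissible linear chain A there exists a unique admissible linear chain A* (the adjoint) with e(A*) = 1 - e(A^T); it satisfies A** = A and (A^T)* = (A*)^T. -/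
/-- `B` is the adjoint of `A`. -/
def IsAdjoint (A B : List ℤ) : Prop := Admissible B ∧ ind B = 1 - ind A.reverse

def T (d : ℕ → ℤ) (n : ℕ) : Matrix (Fin n) (Fin n) ℤ :=
  fun i j => if (i : ℕ) = (j : ℕ) then d i
    else if (i : ℕ) + 1 = (j : ℕ) ∨ (j : ℕ) + 1 = (i : ℕ) then -1 else 0

lemma Tapply (d : ℕ → ℤ) (n : ℕ) (i j : Fin n) :
    T d n i j = if (i : ℕ) = (j : ℕ) then d i
    else if (i : ℕ) + 1 = (j : ℕ) ∨ (j : ℕ) + 1 = (i : ℕ) then -1 else 0 := rfl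

lemma val_succAbove {n : ℕ} (p : Fin (n+1)) (j : Fin n) :
    ((p.succAbove j : Fin (n+1)) : ℕ) = if (j : ℕ) < (p : ℕ) then (j : ℕ) else (j : ℕ) + 1 := by
  rw [Fin.succAbove]
  split_ifs with h1 h2 h3
  · rfl
  · exact absurd (by simpa [Fin.lt_def] using h1) h2
  · exact absurd (by simpa [Fin.lt_def] using h3) h1
  · rfl

lemma detT_zero (d : ℕ → ℤ) : (T d 0).det = 1 := Matrix.det_fin_zero

lemma detT_one (d : ℕ → ℤ) : (T d 1).det = d 0 := by
  rw [Matrix.det_fin_one]; simp [T]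

lemma detT_succ_succ (d : ℕ → ℤ) (n : ℕ) :
    (T d (n+2)).det = d 0 * (T (fun k => d (k+1)) (n+1)).det - (T (fun k => d (k+2)) n).det := by
  rw [show (n+2) = (n+1)+1 from rfl, Matrix.det_succ_row_zero, Fin.sum_univ_succ,
    Fin.sum_univ_succ]
  have h0 : (T d (n+1+1)).submatrix Fin.succ ((0 : Fin (n+2)).succAbove)
      = T (fun k => d (k+1)) (n+1) := by
    ext i j
    simp only [Matrix.submatrix_apply, Tapply, Fin.succAbove_zero, Fin.val_succ, Fin.val_zero]
    split_ifs <;> first | rfl | omega | (congr 1; omega) | (exfalso; omega) | (exfalso; simp_all) | (exfalso; simp_all; omega) | (exfalso; cases ‹_ ∨ _› <;> omega)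
  have hz : ∀ j : Fin n, T d (n+1+1) 0 (((j.succ).succ : Fin (n+2))) = 0 := by
    intro j
    rw [Tapply]
    simp only [Fin.val_zero, Fin.val_succ]
    simp only [show ¬ (0 = (j:ℕ)+1+1) by omega, show ¬ (0+1 = (j:ℕ)+1+1 ∨ (j:ℕ)+1+1+1 = 0) by omega, ↓reduceIte]
  have h1 : ∀ j : Fin n,
      (-1 : ℤ) ^ ((j.succ.succ : Fin (n+2)) : ℕ) * T d (n+1+1) 0 j.succ.succ *
        ((T d (n+1+1)).submatrix Fin.succ (j.succ.succ).succAbove).det = 0 := by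
    intro j; rw [hz]; ring
  rw [Finset.sum_congr rfl (fun j _ => h1 j), Finset.sum_const, smul_zero, add_zero]
  set B := (T d (n+1+1)).submatrix Fin.succ ((0 : Fin (n+1)).succ).succAbove with hB
  have hBdet : B.det = - (T (fun k => d (k+2)) n).det := by
    rw [Matrix.det_succ_column_zero, Fin.sum_univ_succ]
    have hBz : ∀ i : Fin n, B i.succ 0 = 0 := by
      intro i
      rw [hB]
      simp only [Matrix.submatrix_apply, Tapply, Fin.val_succ, Fin.val_zero, val_succAbove]
      split_ifs <;> first | rfl | omega | (congr 1; omega) | (exfalso; omega) | (exfalso; simp_all) | (exfalso; simp_all; omega) | (exfalso; cases ‹_ ∨ _› <;> omega)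
    have hB00 : B 0 0 = -1 := by
      rw [hB]
      simp only [Matrix.submatrix_apply, Tapply, Fin.val_succ, Fin.val_zero, val_succAbove]
      split_ifs <;> first | rfl | omega | (congr 1; omega) | (exfalso; omega) | (exfalso; simp_all) | (exfalso; simp_all; omega) | (exfalso; cases ‹_ ∨ _› <;> omega)
    have hsub : B.submatrix (0 : Fin (n+1)).succAbove Fin.succ = T (fun k => d (k+2)) n := by
      ext i j
      rw [hB]
      simp only [Matrix.submatrix_apply, Fin.succAbove_zero, Tapply, Fin.val_succ, Fin.val_zero,
        val_succAbove, show ∀ x : ℕ, ¬ (x + 1 < 0 + 1) from fun x => by omega, ↓reduceIte]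
      split_ifs <;> first | rfl | omega | (congr 1; omega) | (exfalso; omega) | (exfalso; simp_all) | (exfalso; simp_all; omega) | (exfalso; cases ‹_ ∨ _› <;> omega)
    rw [Finset.sum_congr rfl (fun i _ => ?_), Finset.sum_const, smul_zero, add_zero]
    · rw [hB00, hsub]; simp
    · rw [hBz]; ring
  have hA00 : T d (n+1+1) 0 0 = d 0 := by rw [Tapply]; simp
  have hA01 : T d (n+1+1) 0 ((0 : Fin (n+1)).succ) = -1 := by
    rw [Tapply]
    simp
  rw [h0, hA00, hA01, hBdet]
  simp; ring

def K : List ℤ → ℤ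
  | [] => 1
  | [a] => a
  | a :: b :: t => a * K (b :: t) - K t

lemma chainMatrix_eq_T (l : List ℤ) : chainMatrix l = T (fun k => l.getD k 0) l.length := by
  ext i j
  rw [Tapply, chainMatrix]
  congr 1
  · simp [Fin.ext_iff]
  · rw [List.get_eq_getElem, List.getD_eq_getElem?_getD, List.getElem?_eq_getElem i.isLt]
    rfl

lemma disc_eq_K (l : List ℤ) : disc l = K l := by
  induction l using K.induct with
  | case1 => simp [disc, chainMatrix_eq_T, detT_zero, K]
  | case2 a => simp [disc, chainMatrix_eq_T, detT_one, K, Tapply]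
  | case3 a b t ih1 ih2 =>
    have : disc (a :: b :: t) = a * disc (b :: t) - disc t := by
      rw [disc, disc, disc, chainMatrix_eq_T, chainMatrix_eq_T, chainMatrix_eq_T]
      rw [show (a :: b :: t).length = t.length + 2 from rfl, detT_succ_succ]
      rfl
    rw [this, ih1, ih2, K]

lemma K_cons (a : ℤ) (l : List ℤ) (h : l ≠ []) : K (a :: l) = a * K l - K l.tail := by
  match l with
  | [] => exact absurd rfl h
  | b :: t => rfl

lemma K_bounds : ∀ (l : List ℤ), (∀ x ∈ l, 2 ≤ x) → l ≠ [] → 1 ≤ K l.tail ∧ K l.tail < K l := by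
  intro l
  induction l using K.induct with
  | case1 => intro _ h; exact absurd rfl h
  | case2 a => intro h _; exact ⟨le_refl 1, by simp [K]; linarith [h a (by simp)]⟩
  | case3 a b t ih1 ih2 =>
    intro h _
    have hbt := ih1 (fun x hx => h x (by simp [hx])) (by simp)
    simp only [List.tail_cons] at hbt
    have ha : 2 ≤ a := h a (by simp)
    constructor
    · simp only [List.tail_cons]
      exact hbt.1.trans hbt.2.le
    · show K (b :: t) < K (a :: b :: t)
      rw [K]
      nlinarith [hbt.1, hbt.2]

lemma K_pos (l : List ℤ) (h : ∀ x ∈ l, 2 ≤ x) : 1 ≤ K l := by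
  rcases eq_or_ne l [] with rfl | hne
  · simp [K]
  · exact ((K_bounds l h hne).1.trans (K_bounds l h hne).2.le)

lemma K_append (a : ℤ) : ∀ (l : List ℤ), l ≠ [] → K (l ++ [a]) = a * K l - K l.dropLast := by
  intro l
  induction l using K.induct with
  | case1 => intro h; exact absurd rfl h
  | case2 b => intro _; show K [b, a] = a * K [b] - K [] ; simp [K]; ring
  | case3 b c t ih1 ih2 =>
    intro _
    rcases eq_or_ne t [] with rfl | ht
    · show K [b, c, a] = a * K [b, c] - K [b]
      simp [K]; ring
    · have h1 := ih1 (by simp)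
      have h2 := ih2 ht
      have hc : (c :: t) ++ [a] = c :: (t ++ [a]) := rfl
      have hK1 : K ((b :: c :: t) ++ [a]) = b * K ((c :: t) ++ [a]) - K (t ++ [a]) := rfl
      rw [hK1, h1, h2]
      have hd : (b :: c :: t).dropLast = b :: (c :: t).dropLast := by
        simp [List.dropLast]
      have hne : (c :: t).dropLast ≠ [] := by rw [List.dropLast_cons_of_ne_nil ht]; simp
      have hKd : K (b :: (c :: t).dropLast) = b * K ((c :: t).dropLast) - K ((c :: t).dropLast.tail) :=
        K_cons b _ hne
      have htail : (c :: t).dropLast.tail = t.dropLast := by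
        rw [List.dropLast_cons_of_ne_nil ht]; simp
      rw [hd, hKd, htail, K]
      ring

lemma K_reverse : ∀ (l : List ℤ), K l.reverse = K l := by
  intro l
  induction l using K.induct with
  | case1 => rfl
  | case2 a => rfl
  | case3 a b t ih1 ih2 =>
    have hr : (a :: b :: t).reverse = (b :: t).reverse ++ [a] := by simp
    rw [hr, K_append a _ (by simp), K]
    have hd : (b :: t).reverse.dropLast = t.reverse := by
      rw [List.reverse_cons, List.dropLast_concat]
    rw [hd, ih1, ih2]

lemma K_E : ∀ (l : List ℤ), 2 ≤ l.length →
    K l.tail * K l.dropLast - K l * K l.tail.dropLast = 1 := by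
  intro l
  induction l using K.induct with
  | case1 => intro h; simp at h
  | case2 a => intro h; simp at h
  | case3 a b t ih1 ih2 =>
    intro _
    rcases eq_or_ne t [] with rfl | ht
    · show K [b] * K [a, b].dropLast - K [a, b] * K ([b].dropLast) = 1
      simp [K]; ring
    · have hE := ih1 (by cases t with | nil => exact absurd rfl ht | cons x xs => simp)
      have hd : (a :: b :: t).dropLast = a :: (b :: t).dropLast := by simp [List.dropLast]
      have hbtd : (b :: t).dropLast ≠ [] := by
        rw [List.dropLast_cons_of_ne_nil ht]; simp
      have htail : (b :: t).dropLast.tail = t.dropLast := by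
        rw [List.dropLast_cons_of_ne_nil ht]; simp
      simp only [List.tail_cons] at hE ⊢
      rw [hd, K_cons a _ hbtd, htail, K_cons a _ (by simp)]
      simp only [List.tail_cons]
      nlinarith [hE]

lemma ind_eq (l : List ℤ) : ind l = (K l.tail : ℚ) / (K l : ℚ) := by
  rw [ind, disc_eq_K, disc_eq_K]

lemma K_cast_pos (l : List ℤ) (h : ∀ x ∈ l, 2 ≤ x) : (0 : ℚ) < (K l : ℚ) := by
  exact_mod_cast lt_of_lt_of_le zero_lt_one (by exact_mod_cast K_pos l h)

lemma ind_mem (l : List ℤ) (hl : Admissible l) : 0 < ind l ∧ ind l < 1 := by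
  obtain ⟨hne, h2⟩ := hl
  obtain ⟨hb1, hb2⟩ := K_bounds l h2 hne
  rw [ind_eq]
  have hKpos : (0:ℚ) < (K l : ℚ) := K_cast_pos l h2
  constructor
  · apply div_pos _ hKpos
    exact_mod_cast lt_of_lt_of_le zero_lt_one hb1
  · rw [div_lt_one hKpos]
    exact_mod_cast hb2

lemma tail_entries {a : ℤ} {t : List ℤ} (h : ∀ x ∈ a :: t, 2 ≤ x) : ∀ x ∈ t, 2 ≤ x :=
  fun x hx => h x (by simp [hx])

lemma ind_singleton (a : ℤ) : ind [a] = 1 / (a : ℚ) := by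
  rw [ind_eq]; norm_num [K]

lemma ind_cons (a : ℤ) (t : List ℤ) (h : ∀ x ∈ a :: t, 2 ≤ x) (ht : t ≠ []) :
    ind (a :: t) = 1 / ((a : ℚ) - ind t) := by
  have htt := tail_entries h
  have hKt : (0:ℚ) < (K t : ℚ) := K_cast_pos t htt
  have hKat : (0:ℚ) < (K (a :: t) : ℚ) := K_cast_pos _ h
  have hmem := ind_mem t ⟨ht, htt⟩
  have h2a : (2:ℚ) ≤ (a:ℚ) := by exact_mod_cast h a (by simp)
  have hne2 : (a : ℚ) - ind t ≠ 0 := by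
    have := hmem.2
    intro hc; rw [sub_eq_zero] at hc; rw [← hc] at this; linarith
  rw [ind_eq, List.tail_cons, ind_eq t, div_eq_div_iff hKat.ne' (by rw [ind_eq t] at hne2; exact hne2)]
  rw [K_cons a t ht]
  push_cast
  field_simp

lemma ind_inv (a : ℤ) (s : List ℤ) (h : Admissible (a :: s)) :
    (ind (a :: s))⁻¹ = (a : ℚ) - (if s = [] then 0 else ind s) := by
  rcases eq_or_ne s [] with rfl | hs
  · rw [if_pos rfl, ind_singleton, one_div, inv_inv, sub_zero]
  · rw [if_neg hs, ind_cons a s h.2 hs, one_div, inv_inv]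

lemma r_mem (s : List ℤ) (hs : ∀ x ∈ s, 2 ≤ x) :
    0 ≤ (if s = [] then 0 else ind s) ∧ (if s = [] then 0 else ind s) < 1 := by
  rcases eq_or_ne s [] with rfl | hne
  · norm_num
  · rw [if_neg hne]
    exact ⟨(ind_mem s ⟨hne, hs⟩).1.le, (ind_mem s ⟨hne, hs⟩).2⟩

lemma ind_inj_aux : ∀ n : ℕ, ∀ A B : List ℤ, A.length ≤ n →
    Admissible A → Admissible B → ind A = ind B → A = B := by
  intro n
  induction n with
  | zero =>
    intro A B hlen hA
    exact fun _ _ => absurd (List.length_eq_zero_iff.mp (Nat.le_zero.mp hlen)) hA.1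
  | succ n ih =>
    intro A B hlen hA hB heq
    obtain ⟨a, s, rfl⟩ : ∃ a s, A = a :: s := by
      cases A with
      | nil => exact absurd rfl hA.1
      | cons a s => exact ⟨a, s, rfl⟩
    obtain ⟨b, t, rfl⟩ : ∃ b t, B = b :: t := by
      cases B with
      | nil => exact absurd rfl hB.1
      | cons b t => exact ⟨b, t, rfl⟩
    have hinvA := ind_inv a s hA
    have hinvB := ind_inv b t hB
    rw [heq, hinvB] at hinvA
    have hrA := r_mem s (tail_entries hA.2)
    have hrB := r_mem t (tail_entries hB.2)
    have hab : a = b := by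
      have h1 : ((a - b : ℤ) : ℚ) < 1 := by push_cast; linarith [hinvA]
      have h2 : (-1 : ℚ) < ((a - b : ℤ) : ℚ) := by push_cast; linarith [hinvA]
      have h1' : (a - b : ℤ) < 1 := by exact_mod_cast h1
      have h2' : (-1 : ℤ) < (a - b : ℤ) := by exact_mod_cast h2
      omega
    subst hab
    have hr : (if s = [] then (0:ℚ) else ind s) = (if t = [] then 0 else ind t) := by
      linarith [hinvA]
    rcases eq_or_ne s [] with rfl | hs
    · rcases eq_or_ne t [] with rfl | ht
      · rfl
      · rw [if_pos rfl, if_neg ht] at hr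
        exact absurd hr.symm (ne_of_gt (ind_mem t ⟨ht, tail_entries hB.2⟩).1)
    · rcases eq_or_ne t [] with rfl | ht
      · rw [if_neg hs, if_pos rfl] at hr
        exact absurd hr (ne_of_gt (ind_mem s ⟨hs, tail_entries hA.2⟩).1)
      · rw [if_neg hs, if_neg ht] at hr
        have := ih s t (by simp only [List.length_cons] at hlen; omega)
          ⟨hs, tail_entries hA.2⟩ ⟨ht, tail_entries hB.2⟩ hr
        rw [this]

lemma ind_inj {A B : List ℤ} (hA : Admissible A) (hB : Admissible B) (h : ind A = ind B) :
    A = B := ind_inj_aux A.length A B le_rfl hA hB h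

lemma num_lt_den_of_lt_one {x : ℚ} (h : x < 1) : x.num < (x.den : ℤ) :=
  Rat.lt_one_iff_num_lt_denom.mpr h

lemma ind_surj_aux : ∀ n : ℕ, ∀ q : ℚ, q.num.natAbs ≤ n → 0 < q → q < 1 →
    ∃ A, Admissible A ∧ ind A = q := by
  intro n
  induction n with
  | zero =>
    intro q hlen hq0 _
    have : q.num ≠ 0 := Rat.num_ne_zero.mpr hq0.ne'
    omega
  | succ n ih =>
    intro q hlen hq0 hq1
    have hinv1 : 1 < 1/q := by rw [lt_div_iff₀ hq0]; linarith
    set a : ℤ := ⌈1/q⌉ with ha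
    have ha2 : 2 ≤ a := by
      have := Int.lt_ceil.mpr (show ((1:ℤ):ℚ) < 1/q by exact_mod_cast hinv1)
      omega
    have haq : (1:ℚ)/q ≤ (a:ℚ) := Int.le_ceil _
    have haq2 : (a:ℚ) < 1/q + 1 := Int.ceil_lt_add_one _
    set q' : ℚ := (a:ℚ) - 1/q with hq'
    have hq'0 : 0 ≤ q' := by rw [hq']; linarith
    have hq'1 : q' < 1 := by rw [hq']; linarith
    rcases eq_or_ne q' 0 with hz | hnz
    · refine ⟨[a], ⟨by simp, by intro x hx; simp at hx; omega⟩, ?_⟩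
      rw [ind_singleton]
      have : (a:ℚ) = 1/q := by rw [hq'] at hz; linarith
      rw [this]
      field_simp
    · have hq'pos : 0 < q' := lt_of_le_of_ne hq'0 (Ne.symm hnz)
      -- bound the numerator of q'
      have hnum : q'.num.natAbs ≤ n := by
        have hu : (0:ℤ) < q.num := Rat.num_pos.mpr hq0
        have hrepr : q' = ((a * q.num - q.den : ℤ) : ℚ) / ((q.num : ℤ) : ℚ) := by
          rw [hq']
          have h1 : (1:ℚ)/q = (q.den : ℚ) / (q.num : ℚ) := by
            conv_lhs => rw [← Rat.num_div_den q]
            rw [one_div, inv_div]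
          rw [h1]
          have hn : ((q.num : ℚ)) ≠ 0 := by exact_mod_cast hu.ne'
          push_cast
          field_simp
        have hdvd : ((q'.den : ℤ)) ∣ q.num := by
          rw [hrepr, ← Rat.divInt_eq_div]
          exact Rat.den_dvd _ _
        have hden_le : (q'.den : ℤ) ≤ q.num := Int.le_of_dvd hu hdvd
        have hnn : q'.num < (q'.den : ℤ) := num_lt_den_of_lt_one hq'1
        have hpos' : 0 < q'.num := Rat.num_pos.mpr hq'pos
        omega
      obtain ⟨t, ht, hind⟩ := ih q' hnum hq'pos hq'1
      have hmemcons : ∀ x ∈ a :: t, 2 ≤ x := by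
        intro x hx
        rcases List.mem_cons.mp hx with rfl | hx
        · exact ha2
        · exact ht.2 x hx
      refine ⟨a :: t, ⟨by simp, hmemcons⟩, ?_⟩
      · rw [ind_cons a t hmemcons ht.1, hind]
        rw [hq']
        have hqne : q ≠ 0 := hq0.ne'
        field_simp
        ring

lemma ind_surj (q : ℚ) (h0 : 0 < q) (h1 : q < 1) : ∃ A, Admissible A ∧ ind A = q :=
  ind_surj_aux q.num.natAbs q le_rfl h0 h1

lemma Admissible.reverse {l : List ℤ} (h : Admissible l) : Admissible l.reverse :=
  ⟨by simpa using h.1, fun a ha => h.2 a (by simpa using ha)⟩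

lemma ind_reverse (l : List ℤ) : ind l.reverse = (K l.dropLast : ℚ) / (K l : ℚ) := by
  rw [ind_eq, List.tail_reverse, K_reverse, K_reverse]

lemma K_bezout (l : List ℤ) (h : l ≠ []) : ∃ k, K l.tail * K l.dropLast = 1 + k * K l := by
  match l with
  | [a] => exact ⟨0, by simp [K]⟩
  | a :: b :: t =>
    refine ⟨K (a :: b :: t).tail.dropLast, ?_⟩
    have := K_E (a :: b :: t) (by simp [List.length_cons])
    linarith

lemma dropLast_bounds (l : List ℤ) (h : Admissible l) :
    1 ≤ K l.dropLast ∧ K l.dropLast < K l := by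
  have := K_bounds l.reverse h.reverse.2 h.reverse.1
  rwa [List.tail_reverse, K_reverse, K_reverse] at this

lemma adjoint_core (A B : List ℤ) (hA : Admissible A) (hB : Admissible B)
    (h : ind B = 1 - ind A.reverse) : ind B.reverse = 1 - ind A := by
  obtain ⟨hu1, hu2⟩ := K_bounds A hA.2 hA.1
  obtain ⟨hv1, hv2⟩ := dropLast_bounds A hA
  obtain ⟨hU1, hU2⟩ := K_bounds B hB.2 hB.1
  obtain ⟨hV1, hV2⟩ := dropLast_bounds B hB
  obtain ⟨k, hk⟩ := K_bezout A hA.1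
  obtain ⟨m, hm⟩ := K_bezout B hB.1
  set p := K A with hp
  set u := K A.tail with hutag
  set v := K A.dropLast with hvtag
  set P := K B with hP
  set U := K B.tail with hUtag
  set V := K B.dropLast with hVtag
  have hppos : (0:ℚ) < (p:ℚ) := K_cast_pos A hA.2
  have hPpos : (0:ℚ) < (P:ℚ) := K_cast_pos B hB.2
  -- cross-multiplied equation
  have hcross : U * p = (p - v) * P := by
    rw [ind_eq B, ind_reverse A] at h
    have : (U:ℚ) * p = ((p:ℚ) - v) * P := by
      rw [← hUtag, ← hP, ← hvtag, ← hp] at h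
      field_simp at h
      push_cast
      linarith [h]
    exact_mod_cast this
  have hcop_pu : IsCoprime p u := ⟨-k, v, by linear_combination hk⟩
  have hcop_pv : IsCoprime p v := ⟨-k, u, by linear_combination hk⟩
  have hcop_PU : IsCoprime P U := ⟨-m, V, by linear_combination hm⟩
  have hPp : P = p := by
    have h1 : P ∣ p := by
      have hd : P ∣ p * U := ⟨p - v, by linear_combination hcross⟩
      exact hcop_PU.dvd_of_dvd_mul_right hd
    have h2 : p ∣ P := by
      have hcop : IsCoprime p (p - v) := by
        obtain ⟨x, y, hxy⟩ := hcop_pv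
        exact ⟨x + y, -y, by linear_combination hxy⟩
      have hd : p ∣ P * (p - v) := ⟨U, by linear_combination -hcross⟩
      exact hcop.dvd_of_dvd_mul_right hd
    exact Int.dvd_antisymm (by linarith [K_pos B hB.2]) (by linarith [K_pos A hA.2]) h1 h2
  have hU : U = p - v := by
    have : U * p = (p - v) * p := by rw [hcross, hPp]
    exact mul_right_cancel₀ (by linarith [K_pos A hA.2] : p ≠ 0) this
  have hm' : (p - v) * V = 1 + m * p := by rw [← hU, ← hPp]; exact hm
  have hdvd : p ∣ (V + u) := by
    have hd : p ∣ (V + u) * v := ⟨V - m + k, by linear_combination hk - hm'⟩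
    exact hcop_pv.dvd_of_dvd_mul_right hd
  have hVu : V + u = p := by
    obtain ⟨c, hc⟩ := hdvd
    have hp1 : 1 ≤ p := K_pos A hA.2
    have hle : p ≤ V + u := Int.le_of_dvd (by omega) ⟨c, hc⟩
    have hlt : V + u < 2 * p := by omega
    have hcge : (1:ℤ) ≤ c := le_of_mul_le_mul_left
      (by rw [mul_one, ← hc]; omega) (by omega)
    have hclt : c < 2 := lt_of_mul_lt_mul_left (by rw [← hc]; omega) (by omega)
    have : c = 1 := by omega
    rw [hc, this, mul_one]
  have hVval : V = p - u := by omega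
  rw [ind_reverse B, ind_eq A]
  have h1 : ((K B.dropLast : ℤ) : ℚ) = ((K A : ℤ) : ℚ) - ((K A.tail : ℤ) : ℚ) := by
    exact_mod_cast hVval
  have h2 : ((K B : ℤ) : ℚ) = ((K A : ℤ) : ℚ) := by exact_mod_cast hPp
  have hne : ((K A : ℤ) : ℚ) ≠ 0 := by
    have : (0:ℚ) < ((K A : ℤ) : ℚ) := hppos
    exact this.ne'
  rw [h1, h2]
  field_simp


theorem adjoint_exists_unique (A : List ℤ) (hA : Admissible A) :
    (∃! B, IsAdjoint A B) ∧
    (∀ B, IsAdjoint A B → IsAdjoint B A) ∧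
    (∀ B, IsAdjoint A B → IsAdjoint A.reverse B.reverse) := by
  have hArev : Admissible A.reverse := hA.reverse
  obtain ⟨h0, h1⟩ := ind_mem A.reverse hArev
  obtain ⟨B, hBadm, hBind⟩ := ind_surj (1 - ind A.reverse) (by linarith) (by linarith)
  refine ⟨⟨B, ⟨hBadm, hBind⟩, ?_⟩, ?_, ?_⟩
  · intro C hC
    exact ind_inj hC.1 hBadm (hC.2.trans hBind.symm)
  · intro C hC
    refine ⟨hA, ?_⟩
    have h := adjoint_core A C hA hC.1 hC.2
    linarith
  · intro C hC
    refine ⟨hC.1.reverse, ?_⟩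
    have h := adjoint_core A C hA hC.1 hC.2
    rw [h, List.reverse_reverse]
end
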